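/- For all real numbers a ≥ 0 and p > 0, ∫_0^∞ y^{−1/2} · exp(−a/(4y) − p·y) dy = √(π/p) · exp(−√(a·p)). -/

import Mathlib

open MeasureTheory Filter Set

theorem gauss_phi (q c : ℝ) (hq : 0 < q) (hc : 0 < c) :
    ∫ t in Ioi (0:ℝ), Real.exp (-(q * t - c / t) ^ 2) = Real.sqrt Real.pi / (2 * q) := by
  set φ : ℝ → ℝ := fun t => q * t - c / t with hφ_def
  have hφ_cont : ContinuousOn φ (Ioi 0) :=
    (continuous_const.mul continuous_id).continuousOn.sub
      (continuousOn_const.div continuousOn_id fun x hx => ne_of_gt hx)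
  have hf_cont : ContinuousOn (fun t => Real.exp (-(φ t) ^ 2)) (Ioi 0) :=
    Real.continuous_exp.comp_continuousOn ((hφ_cont.pow 2).neg)
  have hInt : IntegrableOn (fun t => Real.exp (-(φ t) ^ 2)) (Ioi 0) := by
    refine Integrable.mono' (g := fun t => Real.exp (2 * q * c) * Real.exp (-q ^ 2 * t ^ 2))
      (((integrable_exp_neg_mul_sq (by positivity : (0:ℝ) < q ^ 2)).const_mul _).restrict)
      (hf_cont.aestronglyMeasurable measurableSet_Ioi) ?_
    refine (ae_restrict_iff' measurableSet_Ioi).mpr (ae_of_all _ fun t ht => ?_)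
    have ht0 : (0:ℝ) < t := ht
    simp only [Real.norm_eq_abs, abs_of_pos (Real.exp_pos _), ← Real.exp_add]
    apply Real.exp_le_exp.mpr
    have hφt : φ t = q * t - c / t := rfl
    have e : (q * t - c / t) ^ 2 = q ^ 2 * t ^ 2 - 2 * q * c + c ^ 2 / t ^ 2 := by
      field_simp; ring
    have h2 : 0 < c ^ 2 / t ^ 2 := by positivity
    rw [hφt]
    nlinarith [e, h2]
  have hφ_deriv : ∀ t ∈ Ioi (0:ℝ), HasDerivWithinAt φ (q + c / t ^ 2) (Ioi 0) t := by
    intro t ht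
    have ht0 : (0:ℝ) < t := ht
    have h1 : HasDerivAt (fun t : ℝ => q * t) q t := by
      simpa using (hasDerivAt_id t).const_mul q
    have h2 : HasDerivAt (fun t : ℝ => c / t) (c * (-(t ^ 2)⁻¹)) t := by
      simpa [div_eq_mul_inv] using (hasDerivAt_inv ht0.ne').const_mul c
    have h3 := h1.sub h2
    have : HasDerivAt φ (q + c / t ^ 2) t := by
      rw [show q + c / t ^ 2 = q - c * -(t ^ 2)⁻¹ by ring]; exact h3
    exact this.hasDerivWithinAt
  have hφ_mono : StrictMonoOn φ (Ioi 0) := by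
    intro x hx y hy hxy
    have hx0 : (0:ℝ) < x := hx
    have h1 : c / y < c / x := div_lt_div_of_pos_left hc hx0 hxy
    have h2 : q * x < q * y := mul_lt_mul_of_pos_left hxy hq
    simp only [hφ_def]; linarith
  have hφ_img : φ '' Ioi 0 = univ := by
    refine eq_univ_of_forall fun u => ?_
    set s : ℝ := Real.sqrt (u ^ 2 + 4 * q * c) with hs_def
    have hs2 : s ^ 2 = u ^ 2 + 4 * q * c := Real.sq_sqrt (by positivity)
    have hsu : -u < s := by
      have h1 : |u| < s := by
        rw [hs_def, ← Real.sqrt_sq_eq_abs]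
        exact Real.sqrt_lt_sqrt (sq_nonneg u) (by nlinarith)
      calc -u ≤ |u| := neg_le_abs u
        _ < s := h1
    have hus : 0 < u + s := by linarith
    refine ⟨(u + s) / (2 * q), mem_Ioi.mpr (by positivity), ?_⟩
    have ht0 : 0 < (u + s) / (2 * q) := by positivity
    have key : q * ((u + s) / (2 * q)) ^ 2 - c = u * ((u + s) / (2 * q)) := by
      field_simp; nlinarith [hs2]
    simp only [hφ_def]
    field_simp at key ⊢
    nlinarith [key]
  set ψ : ℝ → ℝ := fun s => c / (q * s) with hψ_def
  have hψψ : ∀ s : ℝ, 0 < s → ψ (ψ s) = s := by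
    intro s hs; simp only [hψ_def]; field_simp
  have hψ_pos : ∀ s : ℝ, 0 < s → 0 < ψ s := by
    intro s hs; simp only [hψ_def]; positivity
  have hψ_img : ψ '' Ioi 0 = Ioi 0 := by
    ext t; constructor
    · rintro ⟨s, hs, rfl⟩; exact hψ_pos s hs
    · intro ht; exact ⟨ψ t, hψ_pos t ht, hψψ t ht⟩
  have hψ_inj : InjOn ψ (Ioi 0) := by
    intro x hx y hy hxy
    rw [← hψψ x hx, ← hψψ y hy, hxy]
  have hψ_deriv : ∀ s ∈ Ioi (0:ℝ), HasDerivWithinAt ψ ((c/q) * (-(s ^ 2)⁻¹)) (Ioi 0) s := by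
    intro s hs
    have hs0 : (0:ℝ) < s := hs
    have h : HasDerivAt (fun s : ℝ => (c/q) * s⁻¹) ((c/q) * (-(s ^ 2)⁻¹)) s :=
      (hasDerivAt_inv hs0.ne').const_mul (c/q)
    have heq : ψ = fun s : ℝ => (c/q) * s⁻¹ := by
      funext s; simp only [hψ_def]; ring
    rw [heq]
    exact h.hasDerivWithinAt
  have hφψ : ∀ s : ℝ, 0 < s → φ (ψ s) = -φ s := by
    intro s hs
    simp only [hφ_def, hψ_def]
    field_simp
    ring
  -- pointwise identity used twice
  have hpt : ∀ s ∈ Ioi (0:ℝ), |(c/q) * (-(s ^ 2)⁻¹)| • Real.exp (-(φ (ψ s)) ^ 2)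
      = (c / (q * s ^ 2)) * Real.exp (-(φ s) ^ 2) := by
    intro s hs
    have hs0 : (0:ℝ) < s := hs
    have hneg : (c/q) * (-(s ^ 2)⁻¹) < 0 := by
      have h0 : 0 < (c/q) * (s ^ 2)⁻¹ := by positivity
      linarith
    rw [hφψ s hs0, smul_eq_mul, neg_sq, abs_of_neg hneg]
    have h1 : -((c/q) * (-(s ^ 2)⁻¹)) = c / (q * s ^ 2) := by field_simp
    rw [h1]
  have hD : ∫ t in Ioi (0:ℝ), Real.exp (-(φ t) ^ 2)
      = ∫ s in Ioi (0:ℝ), (c / (q * s ^ 2)) * Real.exp (-(φ s) ^ 2) := by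
    have h := integral_image_eq_integral_abs_deriv_smul measurableSet_Ioi hψ_deriv hψ_inj
      (fun t => Real.exp (-(φ t) ^ 2))
    rw [hψ_img] at h
    rw [h]
    exact setIntegral_congr_fun measurableSet_Ioi hpt
  have hInt2 : IntegrableOn (fun s => (c / (q * s ^ 2)) * Real.exp (-(φ s) ^ 2)) (Ioi 0) := by
    have h := (integrableOn_image_iff_integrableOn_abs_deriv_smul measurableSet_Ioi hψ_deriv
      hψ_inj (fun t => Real.exp (-(φ t) ^ 2)))
    rw [hψ_img] at h
    exact (h.mp hInt).congr_fun hpt measurableSet_Ioi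
  -- Step C : Gaussian integral via substitution φ
  have hC := integral_image_eq_integral_abs_deriv_smul measurableSet_Ioi hφ_deriv hφ_mono.injOn
    (fun u => Real.exp (-u ^ 2))
  rw [hφ_img, Measure.restrict_univ] at hC
  have hgauss : (∫ u : ℝ, Real.exp (-u ^ 2)) = Real.sqrt Real.pi := by
    simpa using integral_gaussian 1
  rw [hgauss] at hC
  have hsplit : ∀ t ∈ Ioi (0:ℝ), |q + c / t ^ 2| • Real.exp (-(φ t) ^ 2)
      = q * Real.exp (-(φ t) ^ 2) + q * ((c / (q * t ^ 2)) * Real.exp (-(φ t) ^ 2)) := by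
    intro t ht
    have ht0 : (0:ℝ) < t := ht
    rw [smul_eq_mul, abs_of_pos (by positivity)]
    field_simp
  rw [setIntegral_congr_fun measurableSet_Ioi hsplit,
    integral_add (hInt.const_mul q) (hInt2.const_mul q),
    integral_const_mul, integral_const_mul, ← hD] at hC
  have hJ : (∫ t in Ioi (0:ℝ), Real.exp (-(φ t) ^ 2)) = Real.sqrt Real.pi / (2 * q) := by
    field_simp
    linarith [hC]
  exact hJ

/-- the Laplace-transform identity
`∫₀^∞ y^{-1/2} exp(-a/(4y) - p y) dy = √(π/p) exp(-√(a p))` for `a ≥ 0`, `p > 0`. -/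
theorem stmt_12 (a p : ℝ) (ha : 0 ≤ a) (hp : 0 < p) :
    (∫ y in Set.Ioi (0 : ℝ), y ^ (-(1 : ℝ) / 2) * Real.exp (-a / (4 * y) - p * y)) =
      Real.sqrt (Real.pi / p) * Real.exp (-Real.sqrt (a * p)) := by
  rcases eq_or_lt_of_le ha with h0 | ha'
  · -- case a = 0
    subst h0
    have h : ∀ y : ℝ, y ^ (-(1 : ℝ) / 2) * Real.exp (-(0:ℝ) / (4 * y) - p * y)
        = y ^ ((1:ℝ)/2 - 1) * Real.exp (-(p * y)) := by
      intro y; norm_num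
    simp_rw [h]
    rw [Real.integral_rpow_mul_exp_neg_mul_Ioi (by norm_num) hp]
    rw [Real.Gamma_one_half_eq,
      show ((1:ℝ)/p) ^ ((1:ℝ)/2) = Real.sqrt (1/p) from (Real.sqrt_eq_rpow _).symm,
      ← Real.sqrt_mul (by positivity : (0:ℝ) ≤ 1/p) Real.pi, one_div_mul_eq_div]
    simp
  · -- case 0 < a
    set q : ℝ := Real.sqrt p with hq_def
    set c : ℝ := Real.sqrt a / 2 with hc_def
    have hq : 0 < q := Real.sqrt_pos.mpr hp
    have hc : 0 < c := by rw [hc_def]; positivity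
    have hq2 : q ^ 2 = p := Real.sq_sqrt hp.le
    have hc2 : c ^ 2 = a / 4 := by
      rw [hc_def, div_pow, Real.sq_sqrt ha'.le]; norm_num
    have hqc : Real.sqrt (a * p) = 2 * c * q := by
      rw [Real.sqrt_mul ha'.le, hc_def, hq_def]; ring
    have ha4 : a = 4 * c ^ 2 := by linarith [hc2]
    -- substitution y = t^2
    have hsq_deriv : ∀ t ∈ Ioi (0:ℝ),
        HasDerivWithinAt (fun t : ℝ => t ^ 2) (2 * t) (Ioi 0) t := by
      intro t ht
      exact (by simpa using hasDerivAt_pow 2 t : HasDerivAt (fun t : ℝ => t ^ 2) (2 * t) t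
        ).hasDerivWithinAt
    have hsq_inj : InjOn (fun t : ℝ => t ^ 2) (Ioi 0) := by
      intro x hx y hy hxy
      have hx0 : (0:ℝ) < x := hx
      have hy0 : (0:ℝ) < y := hy
      simp only at hxy
      calc x = Real.sqrt (x ^ 2) := (Real.sqrt_sq hx0.le).symm
        _ = Real.sqrt (y ^ 2) := by rw [hxy]
        _ = y := Real.sqrt_sq hy0.le
    have hsq_img : (fun t : ℝ => t ^ 2) '' Ioi 0 = Ioi 0 := by
      ext y
      simp only [mem_image, mem_Ioi]
      constructor
      · rintro ⟨t, ht, rfl⟩; positivity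
      · intro hy; exact ⟨Real.sqrt y, Real.sqrt_pos.mpr hy, Real.sq_sqrt hy.le⟩
    have hA := integral_image_eq_integral_abs_deriv_smul measurableSet_Ioi hsq_deriv hsq_inj
      (fun y => y ^ (-(1 : ℝ) / 2) * Real.exp (-a / (4 * y) - p * y))
    rw [hsq_img] at hA
    rw [hA]
    have hpt : ∀ t ∈ Ioi (0:ℝ),
        |2 * t| • ((t ^ 2 : ℝ) ^ (-(1 : ℝ) / 2) * Real.exp (-a / (4 * t ^ 2) - p * t ^ 2))
        = (2 * Real.exp (-Real.sqrt (a * p))) * Real.exp (-(q * t - c / t) ^ 2) := by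
      intro t ht
      have ht0 : (0:ℝ) < t := ht
      have hpow : ((t ^ 2 : ℝ)) ^ (-(1:ℝ)/2) = t⁻¹ := by
        rw [show (-(1:ℝ)/2) = -(1/2) by norm_num, Real.rpow_neg (sq_nonneg t),
          ← Real.sqrt_eq_rpow, Real.sqrt_sq ht0.le]
      have harg : -a / (4 * t ^ 2) - p * t ^ 2
          = -Real.sqrt (a * p) + -(q * t - c / t) ^ 2 := by
        rw [hqc, ha4, ← hq2]
        field_simp
        ring
      rw [smul_eq_mul, abs_of_pos (by positivity : (0:ℝ) < 2 * t), hpow, harg, Real.exp_add]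
      field_simp
    rw [setIntegral_congr_fun measurableSet_Ioi hpt, integral_const_mul,
      gauss_phi q c hq hc]
    rw [Real.sqrt_div Real.pi_pos.le p, ← hq_def]
    field_simp
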